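/- For any regular language L with state complexity n, the state complexity of L* is at most 2^{n−1} + 2^{n−2}. -/

import Mathlib

open scoped Computability

/-- The state complexity of a language: the least number of states of a DFA accepting it. -/
noncomputable def stateComplexity {α : Type*} (L : Language α) : ℕ :=
  sInf {k : ℕ | ∃ M : DFA α (Fin k), M.accepts = L}

namespace StarSCAux

variable {α : Type*} {n : ℕ}

/-- Transfer a DFA along an injection into `Fin m`. -/
theorem exists_dfa_fin {σ : Type*} (D : DFA α σ) {m : ℕ} (f : σ → Fin m)
    (hf : Function.Injective f) : ∃ N : DFA α (Fin m), N.accepts = D.accepts := by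
  classical
  let r : Fin m → σ := fun x => if h : ∃ s, f s = x then h.choose else D.start
  have hrf : ∀ s, r (f s) = s := by
    intro s
    have h : ∃ s', f s' = f s := ⟨s, rfl⟩
    simp only [r, dif_pos h]
    exact hf h.choose_spec
  let N : DFA α (Fin m) := ⟨fun x a => f (D.step (r x) a), f D.start, {x | r x ∈ D.accept}⟩
  have key : ∀ (w : List α) (s : σ), N.evalFrom (f s) w = f (D.evalFrom s w) := by
    intro w
    induction w with
    | nil => intro s; rfl
    | cons a w ih =>
      intro s
      show N.evalFrom (N.step (f s) a) w = f (D.evalFrom (D.step s a) w)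
      have : N.step (f s) a = f (D.step s a) := by
        show f (D.step (r (f s)) a) = f (D.step s a)
        rw [hrf]
      rw [this, ih]
  refine ⟨N, ?_⟩
  ext w
  rw [DFA.mem_accepts, DFA.mem_accepts]
  show N.evalFrom (f D.start) w ∈ N.accept ↔ _
  rw [key]
  show r (f (D.evalFrom D.start w)) ∈ D.accept ↔ _
  rw [hrf]
  rfl

/-- A DFA on `Fin 2` accepting exactly the empty word. -/
def oneDFA (α : Type*) : DFA α (Fin 2) := ⟨fun _ _ => 1, 0, {0}⟩

theorem oneDFA_accepts : (oneDFA α).accepts = 1 := by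
  have hone : ∀ (w : List α), (oneDFA α).evalFrom 1 w = 1 := by
    intro w; induction w with
    | nil => rfl
    | cons a w ih => exact ih
  ext w
  rw [DFA.mem_accepts]
  cases w with
  | nil => simp [oneDFA, Language.mem_one, DFA.evalFrom, DFA.eval]
  | cons a w =>
    have : (oneDFA α).eval (a :: w) = 1 := hone w
    rw [this]
    simp only [Language.mem_one]
    constructor
    · intro h; exact absurd h (by simp [oneDFA])
    · intro h; exact absurd h (List.cons_ne_nil a w)

section StarConstruction

variable (M : DFA α (Fin n))

/-- `S` contains an accepting state. -/
def hit (S : Set (Fin n)) : Prop := ∃ q ∈ S, q ∈ M.accept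

theorem hit_mono {S T : Set (Fin n)} (h : S ⊆ T) (hS : hit M S) : hit M T := by
  obtain ⟨q, hq, hq'⟩ := hS; exact ⟨q, h hq, hq'⟩

/-- Invariant of reachable subsets in the star construction. -/
def good (S : Set (Fin n)) : Prop := S.Nonempty ∧ (hit M S → M.start ∈ S)

/-- Subset step. -/
def stepS (S : Set (Fin n)) (a : α) : Set (Fin n) := (fun q => M.step q a) '' S

/-- Closure adding the start state whenever an accepting state is present. -/
def cl (S : Set (Fin n)) : Set (Fin n) := {q | q ∈ S ∨ (hit M S ∧ q = M.start)}

theorem good_cl {S : Set (Fin n)} (h : S.Nonempty) : good M (cl M S) := by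
  constructor
  · obtain ⟨q, hq⟩ := h; exact ⟨q, Or.inl hq⟩
  · rintro ⟨q, hq | ⟨hS, rfl⟩, hqF⟩
    · exact Or.inr ⟨⟨q, hq, hqF⟩, rfl⟩
    · exact Or.inr ⟨hS, rfl⟩

/-- The subset DFA for `L∗`. -/
def starDFA : DFA α (Option {S : Set (Fin n) // good M S}) where
  step s a :=
    match s with
    | none => some ⟨cl M (stepS M {M.start} a), good_cl M ((Set.singleton_nonempty _).image _)⟩
    | some ⟨S, hS⟩ => some ⟨cl M (stepS M S a), good_cl M (hS.1.image _)⟩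
  start := none
  accept := {s | match s with | none => True | some S => hit M S.1}

/-- States reachable via a nontrivial decomposition. -/
def R (w : List α) : Set (Fin n) :=
  {q | ∃ y z, w = y ++ z ∧ y ∈ M.accepts∗ ∧ z ≠ [] ∧ M.evalFrom M.start z = q}

def R' (w : List α) : Set (Fin n) :=
  R M w ∪ {q | w ∈ M.accepts∗ ∧ q = M.start}

theorem R'_nil : R' M [] = {M.start} := by
  ext q
  constructor
  · rintro (⟨y, z, hw, _, hz, _⟩ | ⟨_, rfl⟩)
    · exact absurd (List.append_eq_nil_iff.mp hw.symm).2 hz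
    · rfl
  · rintro rfl
    exact Or.inr ⟨Language.nil_mem_kstar _, rfl⟩

theorem mem_kstar_append {y z : List α} (hy : y ∈ M.accepts∗) (hz : z ∈ M.accepts) :
    y ++ z ∈ M.accepts∗ := by
  obtain ⟨S, rfl, hS⟩ := hy
  have : S.flatten ++ z = (S ++ [z]).flatten := by simp
  rw [this]
  exact Language.join_mem_kstar (by
    intro u hu
    rcases List.mem_append.mp hu with h | h
    · exact hS u h
    · rw [List.mem_singleton.mp h]; exact hz)

theorem hit_R_iff {w : List α} (hw : w ≠ []) : hit M (R M w) ↔ w ∈ M.accepts∗ := by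
  constructor
  · rintro ⟨q, ⟨y, z, rfl, hy, hz, hq⟩, hqF⟩
    have hz' : M.evalFrom M.start z ∈ M.accept := hq ▸ hqF
    exact mem_kstar_append M hy (M.mem_accepts.mpr hz')
  · intro hwL
    obtain ⟨S, rfl, hS⟩ := Language.mem_kstar_iff_exists_nonempty.mp hwL
    have hSne : S ≠ [] := by rintro rfl; exact hw rfl
    have hsplit : S.dropLast ++ [S.getLast hSne] = S := List.dropLast_append_getLast hSne
    have hlastL := hS _ (List.getLast_mem hSne)
    refine ⟨M.evalFrom M.start (S.getLast hSne),
      ⟨S.dropLast.flatten, S.getLast hSne, ?_, ?_, hlastL.2, rfl⟩, ?_⟩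
    · conv_lhs => rw [← hsplit]
      simp
    · exact Language.join_mem_kstar (fun u hu => (hS u (List.dropLast_subset S hu)).1)
    · exact M.mem_accepts.mp hlastL.1

theorem hit_R'_iff {w : List α} (hw : w ≠ []) : hit M (R' M w) ↔ w ∈ M.accepts∗ := by
  constructor
  · rintro ⟨q, hq | ⟨hwL, rfl⟩, hqF⟩
    · exact (hit_R_iff M hw).mp ⟨q, hq, hqF⟩
    · exact hwL
  · intro h
    exact hit_mono M Set.subset_union_left ((hit_R_iff M hw).mpr h)

theorem good_R' (w : List α) : good M (R' M w) := by
  by_cases hw : w = []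
  · subst hw; rw [R'_nil]
    exact ⟨⟨M.start, rfl⟩, fun _ => rfl⟩
  · constructor
    · exact ⟨M.evalFrom M.start w,
        Or.inl ⟨[], w, (List.nil_append w).symm, Language.nil_mem_kstar _, hw, rfl⟩⟩
    · intro h
      exact Or.inr ⟨(hit_R'_iff M hw).mp h, rfl⟩

theorem stepS_R' (w : List α) (a : α) : stepS M (R' M w) a = R M (w ++ [a]) := by
  ext q
  constructor
  · rintro ⟨p, hp | ⟨hwL, rfl⟩, rfl⟩
    · obtain ⟨y, z, rfl, hy, hz, rfl⟩ := hp
      refine ⟨y, z ++ [a], by rw [List.append_assoc], hy, by simp, ?_⟩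
      exact M.evalFrom_append_singleton _ _ _
    · exact ⟨w, [a], rfl, hwL, by simp, rfl⟩
  · rintro ⟨y, z, he, hy, hz, rfl⟩
    obtain ⟨z', b, rfl⟩ : ∃ z' b, z = z' ++ [b] :=
      ⟨z.dropLast, z.getLast hz, (List.dropLast_append_getLast hz).symm⟩
    have he2 : w ++ [a] = (y ++ z') ++ [b] := by rw [List.append_assoc]; exact he
    obtain ⟨hw2, hb⟩ := List.append_inj' he2 rfl
    have hb' : b = a := by injection hb.symm
    subst hb'
    by_cases hzd : z' = []
    · subst hzd
      have hyw : y = w := by simpa using hw2.symm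
      exact ⟨M.start, Or.inr ⟨hyw ▸ hy, rfl⟩, rfl⟩
    · refine ⟨M.evalFrom M.start z', Or.inl ⟨y, z', hw2, hy, hzd, rfl⟩, ?_⟩
      exact (M.evalFrom_append_singleton _ _ _).symm

theorem cl_stepS_R' (w : List α) (a : α) :
    cl M (stepS M (R' M w) a) = R' M (w ++ [a]) := by
  rw [stepS_R' M w a]
  have hhit : hit M (R M (w ++ [a])) ↔ (w ++ [a]) ∈ M.accepts∗ :=
    hit_R_iff M (by simp)
  ext q
  constructor
  · rintro (hq | ⟨hS, rfl⟩)
    · exact Or.inl hq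
    · exact Or.inr ⟨hhit.mp hS, rfl⟩
  · rintro (hq | ⟨hwL, rfl⟩)
    · exact Or.inl hq
    · exact Or.inr ⟨hhit.mpr hwL, rfl⟩

theorem starDFA_start : (starDFA M).start = none := rfl

theorem starDFA_step_none (a : α) :
    (starDFA M).step none a
      = some ⟨cl M (stepS M {M.start} a), good_cl M ((Set.singleton_nonempty _).image _)⟩ := rfl

theorem starDFA_step_some (S : Set (Fin n)) (hS : good M S) (a : α) :
    (starDFA M).step (some ⟨S, hS⟩) a
      = some ⟨cl M (stepS M S a), good_cl M (hS.1.image _)⟩ := rfl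

theorem starDFA_eval {w : List α} (hw : w ≠ []) :
    (starDFA M).eval w = some ⟨R' M w, good_R' M w⟩ := by
  induction w using List.reverseRecOn with
  | nil => exact absurd rfl hw
  | append_singleton w a ih =>
    show (starDFA M).evalFrom (starDFA M).start (w ++ [a]) = _
    rw [DFA.evalFrom_append_singleton]
    by_cases hw0 : w = []
    · subst hw0
      have h0 : (starDFA M).evalFrom (starDFA M).start [] = none := rfl
      rw [h0, starDFA_step_none]
      apply Option.some_inj.mpr
      apply Subtype.ext
      show cl M (stepS M {M.start} a) = R' M ([] ++ [a])
      rw [← R'_nil M, cl_stepS_R']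
    · rw [show (starDFA M).evalFrom (starDFA M).start w = (starDFA M).eval w from rfl,
        ih hw0, starDFA_step_some]
      apply Option.some_inj.mpr
      apply Subtype.ext
      exact cl_stepS_R' M w a

theorem starDFA_accepts : (starDFA M).accepts = M.accepts∗ := by
  ext w
  rw [DFA.mem_accepts]
  by_cases hw : w = []
  · subst hw
    have : (starDFA M).eval [] = none := rfl
    rw [this]
    constructor
    · intro _; exact Language.nil_mem_kstar _
    · intro _; trivial
  · rw [starDFA_eval M hw]
    show hit M (R' M w) ↔ _
    exact hit_R'_iff M hw

end StarConstruction

end StarSCAux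

/-- For any regular language `L` of state complexity `n`, the state complexity of
the Kleene star `L∗` is at most `2^(n−1) + 2^(n−2)`. -/
theorem star_stateComplexity_le {α : Type*} (n : ℕ) (L : Language α)
    (hreg : ∃ M : DFA α (Fin n), M.accepts = L)
    (hsc : stateComplexity L = n) :
    stateComplexity (L∗) ≤ 2 ^ (n - 1) + 2 ^ (n - 2) := by
  classical
  obtain ⟨M, hM⟩ := hreg
  have hn : 0 < n := Fin.pos_iff_nonempty.mpr ⟨M.start⟩
  set m := 2 ^ (n - 1) + 2 ^ (n - 2) with hm
  have hm2 : 2 ≤ m := by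
    have h1 : 1 ≤ 2 ^ (n - 1) := Nat.one_le_two_pow
    have h2 : 1 ≤ 2 ^ (n - 2) := Nat.one_le_two_pow
    omega
  by_cases hf : ∃ f0 ∈ M.accept, f0 ≠ M.start
  · -- main case: subset construction
    obtain ⟨f0, hf0F, hf0s⟩ := hf
    -- encode states injectively
    let τ := ({x : Fin n // x ≠ f0} → Bool) ⊕ ({x : Fin n // x ≠ f0 ∧ x ≠ M.start} → Bool)
    let enc : Option {S : Set (Fin n) // StarSCAux.good M S} → τ := fun s =>
      match s with
      | none => Sum.inl (fun _ => false)
      | some ⟨S, _⟩ =>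
        if f0 ∈ S then Sum.inr (fun x => decide (x.1 ∈ S))
        else Sum.inl (fun x => decide (x.1 ∈ S))
    have henc : Function.Injective enc := by
      rintro (_ | ⟨S, hS⟩) (_ | ⟨T, hT⟩) h
      · rfl
      · exfalso
        by_cases hT0 : f0 ∈ T
        · simp only [enc, if_pos hT0] at h
          exact Sum.inl_ne_inr h
        · simp only [enc, if_neg hT0] at h
          have h' := Sum.inl_injective h
          obtain ⟨q, hq⟩ := hT.1
          have hq0 : q ≠ f0 := fun he => hT0 (he ▸ hq)
          have := congrFun h' ⟨q, hq0⟩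
          exact of_decide_eq_false this.symm hq
      · exfalso
        by_cases hS0 : f0 ∈ S
        · simp only [enc, if_pos hS0] at h
          exact Sum.inl_ne_inr h.symm
        · simp only [enc, if_neg hS0] at h
          have h' := Sum.inl_injective h
          obtain ⟨q, hq⟩ := hS.1
          have hq0 : q ≠ f0 := fun he => hS0 (he ▸ hq)
          have := congrFun h' ⟨q, hq0⟩
          exact of_decide_eq_false this hq
      · -- some = some
        by_cases hS0 : f0 ∈ S <;> by_cases hT0 : f0 ∈ T
        · simp only [enc, if_pos hS0, if_pos hT0] at h
          have h' := Sum.inr_injective h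
          have hSs : M.start ∈ S := hS.2 ⟨f0, hS0, hf0F⟩
          have hTs : M.start ∈ T := hT.2 ⟨f0, hT0, hf0F⟩
          congr 1
          apply Subtype.ext
          ext q
          by_cases hq1 : q = f0
          · subst hq1; simp [hS0, hT0]
          · by_cases hq2 : q = M.start
            · subst hq2; simp [hSs, hTs]
            · have := congrFun h' ⟨q, hq1, hq2⟩
              simpa using this
        · simp only [enc, if_pos hS0, if_neg hT0] at h
          exact absurd h (Sum.inr_ne_inl)
        · simp only [enc, if_neg hS0, if_pos hT0] at h
          exact absurd h (Sum.inl_ne_inr)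
        · simp only [enc, if_neg hS0, if_neg hT0] at h
          have h' := Sum.inl_injective h
          congr 1
          apply Subtype.ext
          ext q
          by_cases hq1 : q = f0
          · subst hq1; simp [hS0, hT0]
          · have := congrFun h' ⟨q, hq1⟩
            simpa using this
    have hcard1 : Fintype.card {x : Fin n // x ≠ f0} = n - 1 := by
      have := Fintype.card_subtype_compl (α := Fin n) (fun x => x = f0)
      rw [Fintype.card_subtype_eq, Fintype.card_fin] at this
      rw [← this]
    have hcard2 : Fintype.card {x : Fin n // x ≠ f0 ∧ x ≠ M.start} = n - 2 := by
      rw [Fintype.card_subtype]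
      have hfe : Finset.filter (fun x : Fin n => x ≠ f0 ∧ x ≠ M.start) Finset.univ
          = Finset.univ \ {f0, M.start} := by
        ext x
        simp [not_or]
      rw [hfe, Finset.card_sdiff_of_subset (Finset.subset_univ _), Finset.card_univ, Fintype.card_fin]
      have : ({f0, M.start} : Finset (Fin n)).card = 2 := by
        rw [Finset.card_insert_of_notMem (by simpa using hf0s), Finset.card_singleton]
      rw [this]
    have hcardτ : Fintype.card τ = m := by
      rw [Fintype.card_sum, Fintype.card_fun, Fintype.card_fun, hcard1, hcard2,
        Fintype.card_bool]
    let f : Option {S : Set (Fin n) // StarSCAux.good M S} → Fin m :=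
      fun s => Fin.cast hcardτ ((Fintype.equivFin τ) (enc s))
    have hfinj : Function.Injective f := by
      intro s t h
      apply henc
      apply (Fintype.equivFin τ).injective
      exact Fin.cast_injective hcardτ h
    obtain ⟨N, hN⟩ := StarSCAux.exists_dfa_fin (StarSCAux.starDFA M) f hfinj
    apply Nat.sInf_le
    exact ⟨N, by rw [hN, StarSCAux.starDFA_accepts, hM]⟩
  · push_neg at hf
    by_cases hε : M.start ∈ M.accept
    · -- L∗ = L
      have happ : ∀ u v : List α, u ∈ L → v ∈ L → u ++ v ∈ L := by
        intro u v hu hv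
        rw [← hM] at hu hv ⊢
        rw [DFA.mem_accepts] at hu hv ⊢
        rw [DFA.eval, DFA.evalFrom_of_append]
        have : M.evalFrom M.start u = M.start := hf _ hu
        rw [this]
        exact hv
      have hnil : [] ∈ L := by
        rw [← hM, DFA.mem_accepts]
        exact hε
      have hLL : L∗ = L := by
        ext w
        constructor
        · rintro ⟨S, rfl, hS⟩
          induction S with
          | nil => exact hnil
          | cons z S ih =>
            rw [List.flatten_cons]
            exact happ _ _ (hS z (by simp)) (ih (fun y hy => hS y (by simp [hy])))
        · intro h
          exact ⟨[w], by simp, fun y hy => by rw [List.mem_singleton.mp hy]; exact h⟩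
      rw [hLL]
      have hle : stateComplexity L ≤ n := Nat.sInf_le ⟨M, hM⟩
      calc stateComplexity L ≤ n := hle
        _ ≤ 2 ^ (n - 1) := by
            have := Nat.lt_two_pow_self (n := n - 1)
            omega
        _ ≤ m := Nat.le_add_right _ _
    · -- L = ∅, L∗ = 1
      have hacc : M.accept = ∅ := by
        ext q
        simp only [Set.mem_empty_iff_false, iff_false]
        intro hq
        exact hε ((hf q hq) ▸ hq)
      have hL0 : L = 0 := by
        rw [← hM]
        ext w
        rw [DFA.mem_accepts, hacc]
        simp
      have hLs : L∗ = 1 := by rw [hL0, kstar_zero]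
      rw [hLs]
      obtain ⟨N, hN⟩ := StarSCAux.exists_dfa_fin (StarSCAux.oneDFA α)
        (Fin.castLE hm2) (Fin.castLE_injective hm2)
      apply Nat.sInf_le
      exact ⟨N, by rw [hN, StarSCAux.oneDFA_accepts]⟩
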